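/- Let n ≥ 2, P = I - (1/n)·11ᵀ the projection onto the orthogonal complement of the all-ones vector in ℝⁿ, and Z the weighted subset-indicator matrix with rows √(w(‖z‖₁))·zᵀ for z ∈ {0,1}^n with 0 < ‖z‖₁ < n, where w(s) = (C(n,s)·s·(n-s))^{-1}. Then AᵀA = (1/n)·P where A = ZP. -/

import Mathlib

open Finset

lemma filt_insert {α : Type*} [DecidableEq α] (u : Finset α) (i : α) (hi : i ∈ u) (k : ℕ) :
    (u.powersetCard (k+1)).filter (fun S => i ∈ S)
      = ((u.erase i).powersetCard k).image (insert i) := by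
  ext S
  simp only [mem_filter, mem_powersetCard, mem_image]
  constructor
  · rintro ⟨⟨hsub, hcard⟩, hiS⟩
    refine ⟨S.erase i, ⟨fun x hx => mem_erase.2 ⟨(mem_erase.1 hx).1, hsub (mem_erase.1 hx).2⟩,
      by rw [card_erase_of_mem hiS, hcard]; rfl⟩, insert_erase hiS⟩
  · rintro ⟨s, ⟨hsub, hcard⟩, rfl⟩
    have hns : i ∉ s := fun h => (mem_erase.1 (hsub h)).1 rfl
    refine ⟨⟨?_, ?_⟩, mem_insert_self _ _⟩
    · intro x hx
      rcases mem_insert.1 hx with rfl | hx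
      · exact hi
      · exact (mem_erase.1 (hsub hx)).2
    · rw [card_insert_of_notMem hns, hcard]

lemma cnt1 {α : Type*} [DecidableEq α] (u : Finset α) (i : α) (hi : i ∈ u) (k : ℕ) :
    ((u.powersetCard (k+1)).filter (fun S => i ∈ S)).card = (u.card - 1).choose k := by
  rw [filt_insert u i hi k, card_image_of_injOn, card_powersetCard, card_erase_of_mem hi]
  intro s hs t ht h
  have hs' : i ∉ s := fun hh => (mem_erase.1 ((mem_powersetCard.1 hs).1 hh)).1 rfl
  have ht' : i ∉ t := fun hh => (mem_erase.1 ((mem_powersetCard.1 ht).1 hh)).1 rfl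
  rw [← erase_insert hs', ← erase_insert ht', h]

lemma cnt2 {α : Type*} [DecidableEq α] (u : Finset α) (i j : α) (hi : i ∈ u) (hj : j ∈ u)
    (hij : i ≠ j) (k : ℕ) :
    ((u.powersetCard (k+2)).filter (fun S => i ∈ S ∧ j ∈ S)).card = (u.card - 2).choose k := by
  have : (u.powersetCard (k+2)).filter (fun S => i ∈ S ∧ j ∈ S)
      = ((u.powersetCard (k+2)).filter (fun S => i ∈ S)).filter (fun S => j ∈ S) := by
    rw [filter_filter]
  rw [this, filt_insert u i hi (k+1), filter_image]
  rw [show filter (fun s => j ∈ insert i s) ((u.erase i).powersetCard (k+1))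
      = filter (fun s => j ∈ s) ((u.erase i).powersetCard (k+1)) from
    filter_congr (fun s _ => by simp [mem_insert, eq_comm, hij])]
  have hinj : Set.InjOn (insert i)
      ((((u.erase i).powersetCard (k+1)).filter (fun s => j ∈ s)) : Set (Finset α)) := by
    intro s hs t ht h
    simp only [coe_filter, Set.mem_setOf_eq] at hs ht
    have hs' : i ∉ s := fun hh => (mem_erase.1 ((mem_powersetCard.1 hs.1).1 hh)).1 rfl
    have ht' : i ∉ t := fun hh => (mem_erase.1 ((mem_powersetCard.1 ht.1).1 hh)).1 rfl
    rw [← erase_insert hs', ← erase_insert ht', h]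
  rw [card_image_of_injOn hinj, cnt1 (u.erase i) j (mem_erase.2 ⟨hij.symm, hj⟩) k,
    card_erase_of_mem hi]
  norm_num [Nat.sub_sub]

open Matrix

theorem ATA_form (n : ℕ) (hn : 2 ≤ n)
    (w : ℕ → ℝ) (hw : ∀ t, 1 ≤ t → t ≤ n - 1 → w t = ((n.choose t : ℝ) * t * (n - t))⁻¹)
    (Z : Matrix {S : Finset (Fin n) // 0 < S.card ∧ S.card < n} (Fin n) ℝ)
    (hZ : ∀ S i, Z S i = Real.sqrt (w S.1.card) * (if i ∈ S.1 then 1 else 0))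
    (P : Matrix (Fin n) (Fin n) ℝ)
    (hP : P = 1 - (1 / n : ℝ) • Matrix.of (fun (_ _ : Fin n) => (1 : ℝ)))
    (A : Matrix {S : Finset (Fin n) // 0 < S.card ∧ S.card < n} (Fin n) ℝ)
    (hA : A = Z * P) :
    Aᵀ * A = (1 / n : ℝ) • P := by
  classical
  have hn0 : (n : ℝ) ≠ 0 := Nat.cast_ne_zero.2 (by omega)
  have hn2 : (2 : ℝ) ≤ (n : ℝ) := by exact_mod_cast hn
  have hn1 : (n : ℝ) - 1 ≠ 0 := by linarith
  -- entry formula for A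
  have hAe : ∀ (S : {S : Finset (Fin n) // 0 < S.card ∧ S.card < n}) (i : Fin n),
      A S i = Real.sqrt (w S.1.card) * ((if i ∈ S.1 then (1:ℝ) else 0) - S.1.card / n) := by
    intro S i
    rw [hA, Matrix.mul_apply]
    have hterm : ∀ k, Z S k * P k i
        = Real.sqrt (w S.1.card) * ((if k ∈ S.1 then (1:ℝ) else 0) * (if k = i then (1:ℝ) else 0))
          - Real.sqrt (w S.1.card) * (1/n) * (if k ∈ S.1 then (1:ℝ) else 0) := by
      intro k
      rw [hZ, hP]
      simp only [Matrix.sub_apply, Matrix.one_apply, Matrix.smul_apply, Matrix.of_apply,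
        smul_eq_mul, mul_one]
      ring
    rw [Finset.sum_congr rfl (fun k _ => hterm k), Finset.sum_sub_distrib,
      ← Finset.mul_sum, ← Finset.mul_sum]
    have h1 : ∑ k, ((if k ∈ S.1 then (1:ℝ) else 0) * (if k = i then (1:ℝ) else 0))
        = (if i ∈ S.1 then (1:ℝ) else 0) := by
      simp
    have h2 : ∑ k, (if k ∈ S.1 then (1:ℝ) else 0) = (S.1.card : ℝ) := by simp
    rw [h1, h2]
    ring
  -- nonnegativity of w
  have hwpos : ∀ s : ℕ, 1 ≤ s → s ≤ n - 1 → 0 ≤ w s := by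
    intro s h1 h2
    rw [hw s h1 h2]
    have hc : (0:ℝ) < (n.choose s : ℝ) := by
      exact_mod_cast Nat.choose_pos (by omega : s ≤ n)
    have hs : (0:ℝ) < (n:ℝ) - s := by
      have : (s:ℝ) < n := by exact_mod_cast (by omega : s < n)
      linarith
    have hs0 : (0:ℝ) < (s:ℝ) := by exact_mod_cast (by omega : 0 < s)
    positivity
  ext i j
  rw [Matrix.mul_apply]
  simp only [Matrix.transpose_apply]
  set g : Finset (Fin n) → ℝ := fun S =>
    w S.card * ((if i ∈ S then (1:ℝ) else 0) - S.card / n)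
      * ((if j ∈ S then (1:ℝ) else 0) - S.card / n) with hg
  have hterm2 : ∀ S : {S : Finset (Fin n) // 0 < S.card ∧ S.card < n},
      A S i * A S j = g S.1 := by
    intro S
    rw [hAe, hAe]
    have hnn : 0 ≤ w S.1.card := hwpos _ (by omega) (by have := S.2.2; omega)
    have hsq : Real.sqrt (w S.1.card) * Real.sqrt (w S.1.card) = w S.1.card :=
      Real.mul_self_sqrt hnn
    rw [hg]
    simp only []
    rw [show ∀ (x a b : ℝ), (x*a)*(x*b) = (x*x)*a*b from fun x a b => by ring, hsq]
  rw [Finset.sum_congr rfl (fun S _ => hterm2 S)]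
  have hsub : ∑ S : {S : Finset (Fin n) // 0 < S.card ∧ S.card < n}, g S.1
      = ∑ S ∈ Finset.univ.filter (fun S : Finset (Fin n) => 0 < S.card ∧ S.card < n), g S :=
    (Finset.sum_subtype _ (by simp) g).symm
  have hall : ∑ S ∈ Finset.univ.filter (fun S : Finset (Fin n) => 0 < S.card ∧ S.card < n), g S
      = ∑ S ∈ (Finset.univ : Finset (Finset (Fin n))), g S := by
    refine Finset.sum_subset (Finset.filter_subset _ _) (fun S _ hS => ?_)
    simp only [Finset.mem_filter, Finset.mem_univ, true_and, not_and, not_lt] at hS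
    rcases Nat.eq_zero_or_pos S.card with h0 | hpos
    · have : S = ∅ := Finset.card_eq_zero.1 h0
      subst this
      simp [hg]
    · have hle : S.card ≤ n := by
        simpa [Finset.card_univ, Fintype.card_fin] using S.card_le_univ
      have hcn : S.card = n := le_antisymm hle (hS hpos)
      have : S = Finset.univ := by
        rw [← Finset.card_eq_iff_eq_univ, hcn, Fintype.card_fin]
      subst this
      simp [hg, hcn, div_self hn0]
  rw [hsub, hall, ← Finset.powerset_univ, Finset.sum_powerset, Finset.card_univ,
    Fintype.card_fin]
  -- the constant value of the inner sum for 1 ≤ k ≤ n-1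
  set c0 : ℝ := if i = j then 1/(n:ℝ)^2 else -(1/(((n:ℝ)-1) * (n:ℝ)^2)) with hc0
  have hNi : ∀ (k : ℕ), 1 ≤ k → ∀ (a : Fin n),
      ∑ S ∈ Finset.powersetCard k (Finset.univ : Finset (Fin n)),
        (if a ∈ S then (1:ℝ) else 0) = (((n-1).choose (k-1) : ℕ) : ℝ) := by
    intro k hk a
    rw [Finset.sum_boole]
    norm_cast
    obtain ⟨k', rfl⟩ : ∃ k', k = k'+1 := ⟨k-1, by omega⟩
    rw [cnt1 _ a (Finset.mem_univ a) k', Finset.card_univ, Fintype.card_fin]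
    norm_num
  have idn : ∀ m k : ℕ, 1 ≤ m → 1 ≤ k → m * ((m-1).choose (k-1)) = k * m.choose k := by
    intro m k hm1 hk1
    have h := Nat.add_one_mul_choose_eq (m-1) (k-1)
    have e1 : m - 1 + 1 = m := by omega
    have e2 : k - 1 + 1 = k := by omega
    rw [e1, e2] at h
    rw [h, Nat.mul_comm]
  have hinner : ∀ k, 1 ≤ k → k ≤ n - 1 →
      ∑ S ∈ Finset.powersetCard k (Finset.univ : Finset (Fin n)), g S = c0 := by
    intro k hk1 hk2
    have hCpos : 0 < (n.choose k : ℝ) := by exact_mod_cast Nat.choose_pos (by omega : k ≤ n)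
    have hC0 : (n.choose k : ℝ) ≠ 0 := ne_of_gt hCpos
    have hk0 : (k:ℝ) ≠ 0 := Nat.cast_ne_zero.2 (by omega)
    have hnk : (n:ℝ) - k ≠ 0 := by
      have : (k:ℝ) < n := by exact_mod_cast (by omega : k < n)
      linarith
    have hNi' : (((n-1).choose (k-1) : ℕ) : ℝ) = k * (n.choose k) / n := by
      rw [eq_div_iff hn0]
      exact_mod_cast (mul_comm ((n-1).choose (k-1)) n) ▸ idn n k (by omega) hk1
    have hcard : ∑ S ∈ Finset.powersetCard k (Finset.univ : Finset (Fin n)), (1:ℝ)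
        = (n.choose k : ℝ) := by
      rw [Finset.sum_const, Finset.card_powersetCard, Finset.card_univ, Fintype.card_fin,
        nsmul_eq_mul, mul_one]
    have hgS : ∀ S ∈ Finset.powersetCard k (Finset.univ : Finset (Fin n)),
        g S = w k * ((if i ∈ S ∧ j ∈ S then (1:ℝ) else 0)
          - (k/n) * (if i ∈ S then (1:ℝ) else 0) - (k/n) * (if j ∈ S then (1:ℝ) else 0)
          + (k/n) * (k/n)) := by
      intro S hS
      rw [hg]
      simp only []
      rw [(Finset.mem_powersetCard.1 hS).2]
      by_cases hiS : i ∈ S <;> by_cases hjS : j ∈ S <;> simp [hiS, hjS] <;> ring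
    rw [Finset.sum_congr rfl hgS, ← Finset.mul_sum]
    simp only [Finset.sum_add_distrib, Finset.sum_sub_distrib, ← Finset.mul_sum]
    rw [hNi k hk1 i, hNi k hk1 j, hNi']
    rw [show ∑ _S ∈ Finset.powersetCard k (Finset.univ : Finset (Fin n)), ((k:ℝ)/n)
        = ((k:ℝ)/n) * (n.choose k) from by
      rw [Finset.sum_const, Finset.card_powersetCard, Finset.card_univ, Fintype.card_fin,
        nsmul_eq_mul]; ring]
    by_cases hij : i = j
    · subst hij
      have hand : ∑ S ∈ Finset.powersetCard k (Finset.univ : Finset (Fin n)),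
          (if i ∈ S ∧ i ∈ S then (1:ℝ) else 0)
          = (k:ℝ) * (n.choose k) / n := by
        rw [show (fun S => if i ∈ S ∧ i ∈ S then (1:ℝ) else 0) = fun S => if i ∈ S then (1:ℝ) else 0 from by
          funext S; simp, ← hNi']
        exact hNi k hk1 i
      rw [hand, hw k hk1 hk2, hc0, if_pos rfl]
      field_simp
      ring
    · have hNij : ∑ S ∈ Finset.powersetCard k (Finset.univ : Finset (Fin n)),
          (if i ∈ S ∧ j ∈ S then (1:ℝ) else 0)
          = (k:ℝ) * ((k:ℝ)-1) * (n.choose k) / ((n:ℝ) * ((n:ℝ)-1)) := by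
        rw [Finset.sum_boole]
        rcases Nat.lt_or_ge k 2 with hklt | hkge
        · have hk1' : k = 1 := by omega
          subst hk1'
          have hemp : (Finset.powersetCard 1 (Finset.univ : Finset (Fin n))).filter
              (fun S => i ∈ S ∧ j ∈ S) = ∅ := by
            rw [Finset.filter_eq_empty_iff]
            rintro S hS ⟨hiS, hjS⟩
            have hsub2 : ({i, j} : Finset (Fin n)) ⊆ S := by
              intro x hx
              rcases Finset.mem_insert.1 hx with rfl | hx
              · exact hiS
              · rw [Finset.mem_singleton.1 hx]; exact hjS
            have h2 : 2 ≤ S.card := by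
              have hcc := Finset.card_le_card hsub2
              rwa [Finset.card_insert_of_notMem (by simp [hij]), Finset.card_singleton] at hcc
            rw [(Finset.mem_powersetCard.1 hS).2] at h2
            omega
          rw [hemp]
          simp
        · obtain ⟨k', rfl⟩ : ∃ k', k = k'+2 := ⟨k-2, by omega⟩
          rw [cnt2 _ i j (Finset.mem_univ i) (Finset.mem_univ j) hij k', Finset.card_univ,
            Fintype.card_fin]
          have hA1 : (n:ℝ) * (((n-1).choose (k'+1) : ℕ) : ℝ)
              = ((k':ℝ)+2) * ((n.choose (k'+2) : ℕ) : ℝ) := by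
            have h := idn n (k'+2) (by omega) (by omega)
            have e : k' + 2 - 1 = k' + 1 := by omega
            rw [e] at h
            exact_mod_cast h
          have hA2 : ((n:ℝ) - 1) * (((n-2).choose k' : ℕ) : ℝ)
              = ((k':ℝ)+1) * (((n-1).choose (k'+1) : ℕ) : ℝ) := by
            have h := idn (n-1) (k'+1) (by omega) (by omega)
            have e : n - 1 - 1 = n - 2 := by omega
            have e2 : k' + 1 - 1 = k' := by omega
            rw [e, e2] at h
            have hcast : ((n-1 : ℕ) : ℝ) = (n:ℝ) - 1 := by
              push_cast [Nat.cast_sub (by omega : 1 ≤ n)]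
              ring
            rw [← hcast]
            exact_mod_cast h
          rw [eq_div_iff (by
            intro hcon
            rcases mul_eq_zero.1 hcon with h | h
            · exact hn0 h
            · exact hn1 h)]
          push_cast
          linear_combination (n:ℝ) * hA2 + ((k':ℝ)+1) * hA1
      rw [hNij, hw k hk1 hk2, hc0, if_neg hij]
      field_simp
      ring
  -- boundary sums vanish
  have hzero : ∑ S ∈ Finset.powersetCard 0 (Finset.univ : Finset (Fin n)), g S = 0 := by
    rw [Finset.powersetCard_zero, Finset.sum_singleton]
    simp [hg]
  have hlast : ∑ S ∈ Finset.powersetCard n (Finset.univ : Finset (Fin n)), g S = 0 := by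
    have hpc : Finset.powersetCard n (Finset.univ : Finset (Fin n)) = {Finset.univ} := by
      have h := Finset.powersetCard_self (Finset.univ : Finset (Fin n))
      rwa [Finset.card_univ, Fintype.card_fin] at h
    rw [hpc, Finset.sum_singleton]
    simp [hg, Finset.card_univ, Fintype.card_fin, div_self hn0]
  have hsubIcc : Finset.Icc 1 (n-1) ⊆ Finset.range (n+1) := by
    intro x hx
    rw [Finset.mem_Icc] at hx
    rw [Finset.mem_range]
    omega
  have hvan : ∀ k ∈ Finset.range (n+1), k ∉ Finset.Icc 1 (n-1) →
      ∑ S ∈ Finset.powersetCard k (Finset.univ : Finset (Fin n)), g S = 0 := by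
    intro k hk hk'
    rw [Finset.mem_range] at hk
    rw [Finset.mem_Icc] at hk'
    have : k = 0 ∨ k = n := by omega
    rcases this with rfl | rfl
    · exact hzero
    · exact hlast
  rw [← Finset.sum_subset hsubIcc hvan,
    Finset.sum_congr rfl (fun k hk => hinner k (Finset.mem_Icc.1 hk).1 (Finset.mem_Icc.1 hk).2),
    Finset.sum_const, Nat.card_Icc]
  -- finish: (n-1) • c0 = ((1/n) • P) i j
  rw [hP]
  simp only [Matrix.smul_apply, Matrix.sub_apply, Matrix.one_apply, Matrix.of_apply,
    smul_eq_mul, mul_one, nsmul_eq_mul]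
  have hcast : ((n - 1 + 1 - 1 : ℕ) : ℝ) = (n:ℝ) - 1 := by
    push_cast [Nat.cast_sub (by omega : 1 ≤ n)]
    norm_num
  rw [hcast, hc0]
  by_cases hij : i = j
  · rw [if_pos hij, if_pos hij]
    field_simp
  · rw [if_neg hij, if_neg hij]
    field_simp
    ring
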